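/- For every odd integer β ≥ 1 there exists a polynomial V_β(X) ∈ ℚ[X] of degree at most β such that sin^β(z)·cot_β(z) = V_β(cos z) for all z, where cot_β(z) = ((-1)^{β-1}/(β-1)!)·d^{β-1}/dz^{β-1}(cot z), and moreover V_β(-X) = -V_β(X) and V_β(1) = 1. -/

import Mathlib

open Real Polynomial

/-- `cotIter β z` is `cot_β(z) = ((-1)^(β-1)/(β-1)!) · d^{β-1}/dz^{β-1} (cot z)`. -/
noncomputable def cotIter (β : ℕ) (z : ℝ) : ℝ :=
  ((-1:ℝ)^(β-1) / (β-1).factorial) *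
    iteratedDeriv (β-1) (fun t => Real.cos t / Real.sin t) z

noncomputable def QQ : ℕ → Polynomial ℚ
  | 0 => Polynomial.X
  | (n+1) => (QQ n).derivative * (-(1 + Polynomial.X^2))

lemma QQ_deg : ∀ n, (QQ n).natDegree ≤ n + 1 := by
  intro n
  induction n with
  | zero => simp [QQ]
  | succ n ih =>
    calc (QQ (n+1)).natDegree ≤ (QQ n).derivative.natDegree + (-(1 + Polynomial.X^2) : Polynomial ℚ).natDegree :=
          natDegree_mul_le
    _ ≤ n + 2 := by
        have h0 := natDegree_derivative_le (QQ n)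
        have h2 : (-(1 + Polynomial.X^2) : Polynomial ℚ).natDegree ≤ 2 := by
          rw [natDegree_neg]; compute_degree
        omega

lemma QQ_coeff_zero {n k : ℕ} (hk : n + 1 < k) : (QQ n).coeff k = 0 :=
  coeff_eq_zero_of_natDegree_lt (lt_of_le_of_lt (QQ_deg n) hk)

lemma QQ_lead : ∀ n, (QQ n).coeff (n+1) = (-1)^n * n.factorial := by
  intro n
  induction n with
  | zero => simp [QQ]
  | succ n ih =>
    have hd : (QQ n).derivative.natDegree ≤ n := by
      have h0 := natDegree_derivative_le (QQ n); have h1 := QQ_deg n; omega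
    have hQ : QQ (n+1) = -(QQ n).derivative - (QQ n).derivative * Polynomial.X^2 := by
      show (QQ n).derivative * (-(1 + Polynomial.X^2)) = _
      ring
    rw [hQ, coeff_sub, coeff_neg, coeff_mul_X_pow]
    have h1 : (QQ n).derivative.coeff (n+2) = 0 :=
      coeff_eq_zero_of_natDegree_lt (lt_of_le_of_lt hd (by omega))
    rw [h1, coeff_derivative, ih]
    push_cast [Nat.factorial_succ]
    ring

lemma QQ_parity : ∀ n, (QQ n).comp (-Polynomial.X) = (-1)^(n+1) * QQ n := by
  intro n
  induction n with
  | zero => simp [QQ]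
  | succ n ih =>
    have hder : ((QQ n).derivative).comp (-Polynomial.X)
        = - derivative ((QQ n).comp (-Polynomial.X)) := by
      rw [derivative_comp]
      simp [neg_mul]
    have hc : derivative ((-1:Polynomial ℚ)^(n+1) * QQ n)
        = (-1)^(n+1) * derivative (QQ n) := by
      rw [derivative_mul]
      simp [derivative_pow]
    have hq : (-(1 + Polynomial.X ^ 2) : Polynomial ℚ).comp (-Polynomial.X)
        = -(1 + Polynomial.X^2) := by
      simp [neg_comp, add_comp, pow_comp]
    show ((QQ n).derivative * (-(1 + Polynomial.X^2))).comp (-Polynomial.X)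
        = (-1)^(n+2) * ((QQ n).derivative * (-(1 + Polynomial.X^2)))
    rw [mul_comp, hder, ih, hc, hq]
    ring

lemma coeff_comp_neg_X (p : Polynomial ℚ) (k : ℕ) :
    (p.comp (-Polynomial.X)).coeff k = (-1)^k * p.coeff k := by
  induction p using Polynomial.induction_on' with
  | add p q hp hq => simp [add_comp, hp, hq, mul_add]
  | monomial n a =>
    rw [monomial_comp]
    have h1 : (Polynomial.C a) * (-Polynomial.X)^n
        = Polynomial.C ((-1:ℚ)^n * a) * Polynomial.X^n := by
      rw [neg_pow, map_mul, map_pow, C_neg, C_1]; ring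
    rw [h1, coeff_C_mul, coeff_X_pow, coeff_monomial]
    by_cases h : n = k
    · subst h; simp
    · simp [h, Ne.symm h]

lemma QQ_even_coeff {n k : ℕ} (hn : Even n) (hk : Even k) : (QQ n).coeff k = 0 := by
  have h := congrArg (fun p => Polynomial.coeff p k) (QQ_parity n)
  rw [coeff_comp_neg_X, hk.neg_one_pow, one_mul,
    show ((-1:Polynomial ℚ))^(n+1) = Polynomial.C ((-1:ℚ)^(n+1)) by rw [map_pow, C_neg, C_1],
    coeff_C_mul, Odd.neg_one_pow hn.add_one] at h
  linarith

lemma cot_iteratedDeriv : ∀ (n : ℕ) (z : ℝ), Real.sin z ≠ 0 →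
    iteratedDeriv n (fun t => Real.cos t / Real.sin t) z
      = Polynomial.aeval (Real.cos z / Real.sin z) (QQ n) := by
  intro n
  induction n with
  | zero => intro z hz; simp [QQ]
  | succ n ih =>
    intro z hz
    rw [iteratedDeriv_succ]
    have hopen : IsOpen {w : ℝ | Real.sin w ≠ 0} :=
      IsOpen.preimage Real.continuous_sin isOpen_ne
    have hev : iteratedDeriv n (fun t => Real.cos t / Real.sin t)
        =ᶠ[nhds z] (fun w => Polynomial.aeval (Real.cos w / Real.sin w) (QQ n)) :=
      Filter.eventuallyEq_of_mem (hopen.mem_nhds hz) (fun w hw => ih w hw)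
    rw [hev.deriv_eq]
    set c := Real.cos z / Real.sin z with hc
    have hsin : HasDerivAt Real.sin (Real.cos z) z := Real.hasDerivAt_sin z
    have hcos : HasDerivAt Real.cos (-Real.sin z) z := Real.hasDerivAt_cos z
    have hcot : HasDerivAt (fun w => Real.cos w / Real.sin w)
        ((-Real.sin z * Real.sin z - Real.cos z * Real.cos z) / (Real.sin z) ^ 2) z :=
      hcos.div hsin hz
    have hd2 : HasDerivAt (fun w => Real.cos w / Real.sin w) (-(1 + c^2)) z := by
      convert hcot using 1
      have hpyth := Real.sin_sq_add_cos_sq z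
      rw [hc]
      field_simp
      nlinarith [hpyth]
    set P : Polynomial ℝ := (QQ n).map (algebraMap ℚ ℝ) with hPdef
    have key : ∀ (x : ℝ) (p : Polynomial ℚ),
        Polynomial.aeval x p = (p.map (algebraMap ℚ ℝ)).eval x := by
      intro x p; rw [Polynomial.aeval_def, Polynomial.eval_map]
    have hP : HasDerivAt (fun x : ℝ => P.eval x) (P.derivative.eval c) c :=
      P.hasDerivAt c
    have hg : HasDerivAt (fun w => P.eval (Real.cos w / Real.sin w))
        (P.derivative.eval c * (-(1 + c^2))) z := by have := hP.comp z hd2; exact this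
    have hdg : deriv (fun w => Polynomial.aeval (Real.cos w / Real.sin w) (QQ n)) z
        = P.derivative.eval c * (-(1 + c^2)) := by
      simp_rw [key]
      exact hg.deriv
    rw [hdg]
    show P.derivative.eval c * (-(1 + c^2))
        = Polynomial.aeval c ((QQ n).derivative * (-(1 + Polynomial.X^2)))
    rw [map_mul, key c, derivative_map]
    simp only [map_add, map_neg, map_one, map_pow, aeval_X]

theorem stmt_4 (β : ℕ) (hβ : Odd β) (hβ1 : 1 ≤ β) :
    ∃ V : Polynomial ℚ, V.degree ≤ (β : ℕ) ∧
      (∀ z : ℝ, Real.sin z ≠ 0 →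
        Real.sin z ^ β * cotIter β z = Polynomial.aeval (Real.cos z) V) ∧
      V.comp (-Polynomial.X) = -V ∧ V.eval 1 = 1 := by
  obtain ⟨m, hm⟩ := id hβ
  set n := β - 1 with hn
  have hβn : β = n + 1 := by omega
  have hne : Even n := Nat.even_iff.mpr (by omega)
  set W : Polynomial ℚ := ∑ k ∈ Finset.range (β+1),
      Polynomial.C ((QQ n).coeff k) * (Polynomial.X^k * (1 - Polynomial.X^2)^((β-k)/2)) with hW
  refine ⟨Polynomial.C ((n.factorial : ℚ)⁻¹) * W, ?_, ?_, ?_, ?_⟩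
  · -- degree
    have hWd : W.natDegree ≤ β := by
      refine natDegree_sum_le_of_forall_le _ _ (fun k hk => ?_)
      have hkβ : k ≤ β := by simpa using Nat.lt_succ_iff.mp (Finset.mem_range.mp hk)
      refine le_trans natDegree_mul_le ?_
      rw [natDegree_C, zero_add]
      refine le_trans natDegree_mul_le ?_
      rw [natDegree_X_pow]
      have h2 : ((1 - Polynomial.X^2 : Polynomial ℚ)^((β-k)/2)).natDegree ≤ (β-k)/2 * 2 := by
        refine le_trans natDegree_pow_le ?_
        have h3 : (1 - Polynomial.X^2 : Polynomial ℚ).natDegree ≤ 2 := by compute_degree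
        exact Nat.mul_le_mul_left _ h3
      omega
    have : (Polynomial.C ((n.factorial : ℚ)⁻¹) * W).natDegree ≤ β := by
      refine le_trans natDegree_mul_le ?_
      rw [natDegree_C, zero_add]; exact hWd
    exact le_trans degree_le_natDegree (by exact_mod_cast this)
  · -- evaluation
    intro z hz
    have hcd := cot_iteratedDeriv n z hz
    have hβ1' : β - 1 = n := rfl
    rw [cotIter, hβ1', hcd, hne.neg_one_pow]
    set c := Real.cos z / Real.sin z with hc
    have hdeg : (QQ n).natDegree < β + 1 := by have := QQ_deg n; omega
    rw [Polynomial.aeval_eq_sum_range' hdeg c]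
    rw [map_mul, aeval_C, hW, map_sum]
    have hterm : ∀ k ∈ Finset.range (β+1),
        Real.sin z ^ β * ((QQ n).coeff k • c ^ k)
          = Polynomial.aeval (Real.cos z)
              (Polynomial.C ((QQ n).coeff k) * (Polynomial.X^k * (1 - Polynomial.X^2)^((β-k)/2))) := by
      intro k hk
      have hkβ : k ≤ β := Nat.lt_succ_iff.mp (Finset.mem_range.mp hk)
      rw [map_mul, aeval_C, map_mul, map_pow, aeval_X, map_pow, map_sub, map_one, map_pow, aeval_X]
      by_cases hq : (QQ n).coeff k = 0
      · simp [hq]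
      · have hkodd : Odd k := by
          by_contra hev
          exact hq (QQ_even_coeff hne (Nat.not_odd_iff_even.mp hev))
        have heven : Even (β - k) := Nat.Odd.sub_odd hβ hkodd
        have h1 : Real.sin z ^ (β - k) = (1 - Real.cos z^2)^((β-k)/2) := by
          obtain ⟨t, ht⟩ := heven
          rw [← Real.sin_sq, ← pow_mul]
          congr 1
          omega
        have h2 : Real.sin z ^ β = Real.sin z ^ k * Real.sin z ^ (β - k) := by
          rw [← pow_add]; congr 1; omega
        rw [h2, h1, hc, Rat.smul_def, div_pow]
        simp only [eq_ratCast]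
        field_simp
    rw [← Finset.sum_congr rfl hterm, ← Finset.mul_sum]
    have halg : ((algebraMap ℚ ℝ) ((n.factorial:ℚ)⁻¹)) = ((n.factorial:ℝ))⁻¹ := by
      simp
    rw [halg]
    ring
  · -- parity
    rw [mul_comp, C_comp, hW, sum_comp]
    have : ∀ k ∈ Finset.range (β+1),
        (Polynomial.C ((QQ n).coeff k) * (Polynomial.X^k * (1 - Polynomial.X^2)^((β-k)/2))).comp (-Polynomial.X)
        = -(Polynomial.C ((QQ n).coeff k) * (Polynomial.X^k * (1 - Polynomial.X^2)^((β-k)/2))) := by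
      intro k hk
      rw [mul_comp, C_comp, mul_comp, pow_comp, X_comp, pow_comp, sub_comp, one_comp, pow_comp, X_comp]
      rw [neg_sq]
      rcases Nat.even_or_odd k with hke | hko
      · rw [QQ_even_coeff hne hke]; simp
      · rw [hko.neg_pow]; ring
    rw [Finset.sum_congr rfl this, Finset.sum_neg_distrib]
    ring
  · -- eval at 1
    rw [eval_mul, eval_C, hW, eval_finset_sum]
    have hsum : ∑ k ∈ Finset.range (β+1),
        ((Polynomial.C ((QQ n).coeff k) * (Polynomial.X^k * (1 - Polynomial.X^2)^((β-k)/2))).eval 1)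
        = (QQ n).coeff β := by
      rw [Finset.sum_eq_single β]
      · simp
      · intro k hk hkne
        have hkβ : k < β := by
          have := Finset.mem_range.mp hk; omega
        rcases Nat.even_or_odd k with hke | hko
        · rw [QQ_even_coeff hne hke]; simp
        · have heven : Even (β - k) := Nat.Odd.sub_odd hβ hko
          have hpos : 1 ≤ (β - k)/2 := by
            obtain ⟨t, ht⟩ := heven
            omega
          simp only [eval_mul, eval_C, eval_pow, eval_sub, eval_one, eval_X]
          rw [show ((1:ℚ) - 1^2) = 0 by ring, zero_pow (by omega)]
          ring
      · intro h; exact absurd (Finset.self_mem_range_succ β) h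
    rw [hsum, hβn, QQ_lead, hne.neg_one_pow, one_mul]
    rw [inv_mul_cancel₀]
    exact_mod_cast Nat.factorial_ne_zero n
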